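/- The Malvenuto–Reutenauer coproduct Δ_MR(σ) = Σ_{i=0}^n std(σ(1)⋯σ(i)) ⊗ std(σ(i+1)⋯σ(n)) on ⊕_{n≥0} K[Σ_n] is coassociative. -/

import Mathlib

open scoped BigOperators TensorProduct

/-- Standardization of a word with distinct letters: the unique permutation
(in one-line notation) order-isomorphic to it: the entry at a position is
`1 +` the number of letters of the word smaller than the letter there. -/
def std (w : List ℕ) : List ℕ :=
  w.map (fun a => 1 + (w.filter (fun b => b < a)).length)

/-- The face map `Fᵢ` (1-indexed): delete the `i`-th entry of the one-line
notation and standardize. -/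
def faceStd (i : ℕ) (w : List ℕ) : List ℕ := std (w.eraseIdx (i - 1))

/-- The Malvenuto–Reutenauer coproduct on the span of all (one-line notations of)
permutations inside the free module on words:
`Δ_MR(σ) = Σ_{i=0}^n std(σ(1)⋯σ(i)) ⊗ std(σ(i+1)⋯σ(n))`. -/
noncomputable def deltaMR (K : Type) [Field K] :
    (List ℕ →₀ K) →ₗ[K] (List ℕ →₀ K) ⊗[K] (List ℕ →₀ K) :=
  Finsupp.lift ((List ℕ →₀ K) ⊗[K] (List ℕ →₀ K)) K (List ℕ)
    (fun w => ∑ i ∈ Finset.range (w.length + 1),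
      Finsupp.single (std (w.take i)) (1 : K) ⊗ₜ[K]
        Finsupp.single (std (w.drop i)) (1 : K))

/- ### Auxiliary lemmas -/

lemma aux_countP_lt_countP {w : List ℕ} {a b : ℕ} (ha : a ∈ w) (hab : a < b) :
    w.countP (fun x => x < a) < w.countP (fun x => x < b) := by
  induction w with
  | nil => cases ha
  | cons c t ih =>
    have hmono : t.countP (fun x => decide (x < a)) ≤ t.countP (fun x => decide (x < b)) :=
      List.countP_mono_left (fun x _ h => by simp at h ⊢; omega)
    rcases List.mem_cons.1 ha with rfl | hmem
    · simp only [List.countP_cons]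
      rw [if_neg (by simp), if_pos (by simp [hab])]
      omega
    · have := ih hmem
      simp only [List.countP_cons]
      split_ifs <;> simp_all <;> omega

lemma aux_std_rel {w : List ℕ} {a b : ℕ} (ha : a ∈ w) (hb : b ∈ w) :
    a < b ↔ 1 + (w.filter (fun x => x < a)).length
            < 1 + (w.filter (fun x => x < b)).length := by
  rw [← List.countP_eq_length_filter, ← List.countP_eq_length_filter]
  constructor
  · intro h
    have := aux_countP_lt_countP ha h
    omega
  · intro h
    by_contra hab
    rcases lt_or_eq_of_le (not_lt.1 hab) with hba | hba
    · have := aux_countP_lt_countP hb hba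
      omega
    · subst hba; omega

lemma aux_std_map {w : List ℕ} {f : ℕ → ℕ}
    (h : ∀ a ∈ w, ∀ b ∈ w, (a < b ↔ f a < f b)) : std (w.map f) = std w := by
  unfold std
  rw [List.map_map]
  refine List.map_congr_left fun a ha => ?_
  simp only [Function.comp_apply]
  congr 1
  rw [← List.countP_eq_length_filter, ← List.countP_eq_length_filter, List.countP_map]
  refine List.countP_congr fun b hb => ?_
  simp only [Function.comp_apply, decide_eq_true_eq]
  exact (h b hb a ha).symm

lemma aux_std_take (w : List ℕ) (i : ℕ) : std ((std w).take i) = std (w.take i) := by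
  have h : (std w).take i
      = (w.take i).map (fun a => 1 + (w.filter (fun b => b < a)).length) := by
    unfold std; rw [List.map_take]
  rw [h]
  refine aux_std_map fun a ha b hb => ?_
  exact aux_std_rel (List.take_subset i w ha) (List.take_subset i w hb)

lemma aux_std_drop (w : List ℕ) (i : ℕ) : std ((std w).drop i) = std (w.drop i) := by
  have h : (std w).drop i
      = (w.drop i).map (fun a => 1 + (w.filter (fun b => b < a)).length) := by
    unfold std; rw [List.map_drop]
  rw [h]
  refine aux_std_map fun a ha b hb => ?_
  exact aux_std_rel (List.drop_subset i w ha) (List.drop_subset i w hb)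

lemma aux_std_length (w : List ℕ) : (std w).length = w.length := by
  simp [std]

lemma aux_deltaMR_single (K : Type) [Field K] (w : List ℕ) :
    deltaMR K (Finsupp.single w (1 : K)) =
      ∑ i ∈ Finset.range (w.length + 1),
        Finsupp.single (std (w.take i)) (1 : K) ⊗ₜ[K]
          Finsupp.single (std (w.drop i)) (1 : K) := by
  rw [deltaMR, Finsupp.lift_apply, Finsupp.sum_single_index] <;> simp

set_option maxHeartbeats 1000000 in
set_option synthInstance.maxHeartbeats 400000 in
/-- the Malvenuto–Reutenauer coproduct is coassociative. -/
theorem deltaMR_coassoc (K : Type) [Field K] (n : ℕ) (w : List ℕ)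
    (hperm : w.Perm (List.range' 1 n)) :
    (TensorProduct.assoc K _ _ _)
        ((TensorProduct.map (deltaMR K) LinearMap.id)
          ((deltaMR K) (Finsupp.single w (1 : K))))
      = (TensorProduct.map LinearMap.id (deltaMR K))
          ((deltaMR K) (Finsupp.single w (1 : K))) := by
  set N := w.length with hN
  rw [aux_deltaMR_single, map_sum, map_sum, map_sum]
  simp only [TensorProduct.map_tmul, LinearMap.id_coe, id_eq, aux_deltaMR_single,
    TensorProduct.sum_tmul, TensorProduct.tmul_sum, map_sum, TensorProduct.assoc_tmul,
    aux_std_length, aux_std_take, aux_std_drop, List.length_take, List.length_drop]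
  -- LHS : ∑ j in range (N+1), ∑ i in range (min j N + 1), ...
  -- RHS : ∑ i in range (N+1), ∑ k in range (N - i + 1), ...
  have hL : ∀ j ∈ Finset.range (N + 1),
      (∑ i ∈ Finset.range (min j N + 1),
        Finsupp.single (std ((w.take j).take i)) (1 : K) ⊗ₜ[K]
          (Finsupp.single (std ((w.take j).drop i)) (1 : K) ⊗ₜ[K]
            Finsupp.single (std (w.drop j)) (1 : K)))
      = ∑ i ∈ Finset.range (j + 1),
        Finsupp.single (std (w.take i)) (1 : K) ⊗ₜ[K]
          (Finsupp.single (std ((w.drop i).take (j - i))) (1 : K) ⊗ₜ[K]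
            Finsupp.single (std (w.drop j)) (1 : K)) := by
    intro j hj
    rw [Finset.mem_range] at hj
    have hjN : min j N = j := Nat.min_eq_left (by omega)
    rw [hjN]
    refine Finset.sum_congr rfl fun i hi => ?_
    rw [Finset.mem_range] at hi
    rw [List.take_take, Nat.min_eq_left (by omega), List.drop_take]
  rw [Finset.sum_congr rfl hL]
  simp only [Finset.range_eq_Ico]; rw [← Finset.sum_Ico_Ico_comm 0 (N + 1)]
  simp only [← Finset.range_eq_Ico]
  refine Finset.sum_congr rfl fun i hi => ?_
  rw [Finset.mem_range] at hi
  rw [Finset.sum_Ico_eq_sum_range]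
  have hlen : N - i + 1 = N + 1 - i := by omega
  rw [hlen]
  refine Finset.sum_congr rfl fun k hk => ?_
  simp only [List.drop_drop, Nat.add_sub_cancel_left]
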